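/- Let A be a nonzero m×n real matrix (n ≥ 1) and b ∈ ℝᵐ such that S = {y ∈ ℝⁿ : Ay ≤ b componentwise} is nonempty, and let τ > 0 be a Hoffman constant for the system, i.e., dist(y, S) ≤ τ·‖(Ay − b)₊‖ for every y ∈ ℝⁿ. Then for every x ∈ ℝⁿ, one step of the doubly stochastic alternating projection algorithm with stepsize α = 1/n satisfies Σ_{i=1}^{m} Σ_{j=1}^{n} p_{ij} dist(x⁺(i,j), S)² ≤ (1 − 1/(n·τ²·‖A‖_F²))·dist(x, S)², so the distance to the feasible set converges linearly in expectation. (Theorem 4.) -/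

import Mathlib

open Matrix BigOperators

/-- Squared Frobenius norm of a matrix. -/
noncomputable def frobSq {m n : ℕ} (A : Matrix (Fin m) (Fin n) ℝ) : ℝ :=
  ∑ i, ∑ j, (A i j) ^ 2

/-- One step of the doubly stochastic alternating projection algorithm (Algorithm 2):
if the selected inequality `i` is satisfied, nothing changes; otherwise coordinate `j`
is updated via the Gauss–Seidel rule (with the convention `x⁺ = x` when `A i j = 0`). -/
noncomputable def dsapStep {m n : ℕ} (A : Matrix (Fin m) (Fin n) ℝ) (b : Fin m → ℝ)
    (α : ℝ) (x : EuclideanSpace ℝ (Fin n)) (i : Fin m) (j : Fin n) :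
    EuclideanSpace ℝ (Fin n) :=
  if A.mulVec x i ≤ b i then x
  else if A i j = 0 then x
  else WithLp.toLp 2 (Function.update x j (x j + α * ((b i - A.mulVec x i) / A i j)))

/-- The componentwise positive part `(A x - b)₊` of the residual. -/
noncomputable def posRes {m n : ℕ} (A : Matrix (Fin m) (Fin n) ℝ) (b : Fin m → ℝ)
    (x : EuclideanSpace ℝ (Fin n)) : EuclideanSpace ℝ (Fin m) :=
  WithLp.toLp 2 (fun i => max 0 (A.mulVec x i - b i))

private lemma euclid_dist_sq {n : ℕ} (a c : EuclideanSpace ℝ (Fin n)) :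
    dist a c ^ 2 = ∑ k, (a k - c k) ^ 2 := by
  rw [EuclideanSpace.dist_eq, Real.sq_sqrt (Finset.sum_nonneg fun k _ => sq_nonneg _)]
  refine Finset.sum_congr rfl fun k _ => ?_
  rw [Real.dist_eq, sq_abs]

private lemma dist_update_sq {n : ℕ} (x z u : EuclideanSpace ℝ (Fin n)) (j : Fin n) (t : ℝ)
    (huj : u j = x j + t) (huk : ∀ k, k ≠ j → u k = x k) :
    dist u z ^ 2 = dist x z ^ 2 + (2 * t * (x j - z j) + t ^ 2) := by
  rw [euclid_dist_sq u z, euclid_dist_sq x z]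
  have h1 : ∑ k, ((u k - z k) ^ 2 - (x k - z k) ^ 2) = 2 * t * (x j - z j) + t ^ 2 := by
    rw [Finset.sum_eq_single j]
    · rw [huj]; ring
    · intro k _ hk; rw [huk k hk]; ring
    · intro h; exact absurd (Finset.mem_univ j) h
  rw [Finset.sum_sub_distrib] at h1
  linarith

/-- Theorem 4: if `S = {y : A y ≤ b}` is nonempty and `τ > 0` is a Hoffman
constant, i.e. `dist(y, S) ≤ τ ‖(A y - b)₊‖` for every `y`, then one step of the doubly
stochastic alternating projection algorithm with stepsize `α = 1/n` satisfies
`E[dist(x⁺, S)²] ≤ (1 - 1/(n τ² ‖A‖_F²)) dist(x, S)²`. -/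
theorem dsap_linear_rate_hoffman {m n : ℕ} (hn : 1 ≤ n)
    (A : Matrix (Fin m) (Fin n) ℝ) (hA : A ≠ 0) (b : Fin m → ℝ)
    (S : Set (EuclideanSpace ℝ (Fin n)))
    (hS : S = {y : EuclideanSpace ℝ (Fin n) | ∀ i, A.mulVec y i ≤ b i})
    (hS_ne : S.Nonempty)
    (τ : ℝ) (hτ : 0 < τ)
    (hhoffman : ∀ y : EuclideanSpace ℝ (Fin n),
      Metric.infDist y S ≤ τ * ‖posRes A b y‖)
    (x : EuclideanSpace ℝ (Fin n)) :
    ∑ i, ∑ j, ((A i j) ^ 2 / frobSq A) *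
        (Metric.infDist (dsapStep A b (1 / (n : ℝ)) x i j) S) ^ 2 ≤
      (1 - 1 / ((n : ℝ) * τ ^ 2 * frobSq A)) * (Metric.infDist x S) ^ 2 := by
  classical
  set F := frobSq A with hFdef
  set nn := (n : ℝ) with hnn
  have hnpos : (0 : ℝ) < nn := by
    rw [hnn]
    exact_mod_cast Nat.pos_of_ne_zero (by omega)
  -- F > 0
  have hex : ∃ i j, A i j ≠ 0 := by
    by_contra h
    push_neg at h
    exact hA (by ext i j; simpa using h i j)
  obtain ⟨i0, j0, h0⟩ := hex
  have hFpos : 0 < F := by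
    have h1 : 0 < (A i0 j0) ^ 2 := by positivity
    have h2 : (A i0 j0) ^ 2 ≤ ∑ j, (A i0 j) ^ 2 :=
      Finset.single_le_sum (f := fun j => (A i0 j) ^ 2) (fun j _ => sq_nonneg _)
        (Finset.mem_univ _)
    have h3 : ∑ j, (A i0 j) ^ 2 ≤ F :=
      Finset.single_le_sum (f := fun i => ∑ j, (A i j) ^ 2)
        (fun i _ => Finset.sum_nonneg fun j _ => sq_nonneg _) (Finset.mem_univ _)
    linarith
  -- S is closed; pick the nearest point z
  have hclosed : IsClosed S := by
    rw [hS]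
    have heq : {y : EuclideanSpace ℝ (Fin n) | ∀ i, A.mulVec y i ≤ b i}
        = ⋂ i, {y : EuclideanSpace ℝ (Fin n) | A.mulVec y i ≤ b i} := by
      ext y; simp
    rw [heq]
    refine isClosed_iInter fun i => isClosed_le ?_ continuous_const
    simp only [Matrix.mulVec, dotProduct]
    exact continuous_finset_sum _ fun j _ => continuous_const.mul ((continuous_apply j).comp (PiLp.continuous_ofLp 2 _))
  obtain ⟨z, hzS, hzd⟩ := hclosed.exists_infDist_eq_dist hS_ne x
  have hzfeas : ∀ i, A.mulVec z i ≤ b i := by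
    have := hzS; rw [hS] at this; exact this
  set D := dist x z ^ 2 with hD
  -- key per-row bound
  have key : ∀ i, ∑ j, ((A i j) ^ 2 / F) * dist (dsapStep A b (1 / nn) x i j) z ^ 2
      ≤ (∑ j, (A i j) ^ 2) / F * D - (1 / (nn * F)) * (posRes A b x i) ^ 2 := by
    intro i
    by_cases hi : A.mulVec x i ≤ b i
    · have hstep : ∀ j, dsapStep A b (1 / nn) x i j = x := fun j => by
        simp [dsapStep, hi]
      have hpr : posRes A b x i = 0 := by
        simp only [posRes, PiLp.toLp_apply]
        exact max_eq_left (by linarith)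
      simp only [hstep, hpr]
      rw [← hD, ← Finset.sum_mul, ← Finset.sum_div]
      simp
    · push_neg at hi
      set c : ℝ := b i - A.mulVec x i with hc
      have hcneg : c < 0 := by simp [hc]; linarith
      have hpr : posRes A b x i = -c := by
        simp only [posRes, PiLp.toLp_apply, hc]
        rw [max_eq_right (by linarith)]
        ring
      have hterm : ∀ j, ((A i j) ^ 2 / F) * dist (dsapStep A b (1 / nn) x i j) z ^ 2
          ≤ (A i j) ^ 2 / F * D + (2 * (1 / nn) * c / F) * (A i j * (x j - z j))
            + (1 / nn) ^ 2 * c ^ 2 / F := by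
        intro j
        by_cases haij : A i j = 0
        · have hstep : dsapStep A b (1 / nn) x i j = x := by
            simp [dsapStep, haij]
          rw [hstep, haij]
          have h1 : (0:ℝ) ≤ (1 / nn) ^ 2 * c ^ 2 / F := by positivity
          simp only [ne_eq, zero_pow, OfNat.ofNat_ne_zero, not_false_eq_true, zero_div,
            zero_mul, mul_zero, zero_add]
          linarith
        · have hstep : dsapStep A b (1 / nn) x i j
              = WithLp.toLp 2 (Function.update x j (x j + (1 / nn) * (c / A i j))) := by
            rw [dsapStep, if_neg (not_le.mpr hi), if_neg haij]
          rw [hstep, dist_update_sq x z (WithLp.toLp 2 (Function.update x j (x j + (1 / nn) * (c / A i j)))) j ((1 / nn) * (c / A i j))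
            (Function.update_self j _ x) (fun k hk => Function.update_of_ne hk _ x)]
          have heq : ((A i j) ^ 2 / F) * (D + (2 * ((1 / nn) * (c / A i j)) * (x j - z j)
              + ((1 / nn) * (c / A i j)) ^ 2))
              = (A i j) ^ 2 / F * D + (2 * (1 / nn) * c / F) * (A i j * (x j - z j))
                + (1 / nn) ^ 2 * c ^ 2 / F := by
            field_simp
            ring
          rw [← hD]
          exact le_of_eq heq
      have hsum1 : ∑ j, A i j * (x j - z j) = A.mulVec x i - A.mulVec z i := by
        simp [Matrix.mulVec, dotProduct, mul_sub, Finset.sum_sub_distrib]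
      have hge : -c ≤ ∑ j, A i j * (x j - z j) := by
        rw [hsum1]
        have := hzfeas i
        simp [hc]; linarith
      have hcoef : 2 * (1 / nn) * c / F ≤ 0 := by
        have h1 : 2 * (1 / nn) * c < 0 := mul_neg_of_pos_of_neg (by positivity) hcneg
        exact le_of_lt (div_neg_of_neg_of_pos h1 hFpos)
      have hmid : (2 * (1 / nn) * c / F) * (∑ j, A i j * (x j - z j))
          ≤ (2 * (1 / nn) * c / F) * (-c) := mul_le_mul_of_nonpos_left hge hcoef
      have hconst : ∑ j : Fin n, ((1 / nn) ^ 2 * c ^ 2 / F) = nn * ((1 / nn) ^ 2 * c ^ 2 / F) := by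
        rw [Finset.sum_const, Finset.card_univ, Fintype.card_fin]
        push_cast [hnn]
        ring
      have e1 : (2 * (1 / nn) * c / F) * (-c) + nn * ((1 / nn) ^ 2 * c ^ 2 / F)
          = -(1 / (nn * F)) * c ^ 2 := by
        field_simp
        ring
      calc ∑ j, ((A i j) ^ 2 / F) * dist (dsapStep A b (1 / nn) x i j) z ^ 2
          ≤ ∑ j, ((A i j) ^ 2 / F * D + (2 * (1 / nn) * c / F) * (A i j * (x j - z j))
              + (1 / nn) ^ 2 * c ^ 2 / F) := Finset.sum_le_sum fun j _ => hterm j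
        _ = (∑ j, (A i j) ^ 2) / F * D
            + (2 * (1 / nn) * c / F) * (∑ j, A i j * (x j - z j))
            + nn * ((1 / nn) ^ 2 * c ^ 2 / F) := by
            rw [Finset.sum_add_distrib, Finset.sum_add_distrib, ← Finset.sum_mul,
              ← Finset.sum_div, ← Finset.mul_sum, hconst]
        _ ≤ (∑ j, (A i j) ^ 2) / F * D - (1 / (nn * F)) * (posRes A b x i) ^ 2 := by
            rw [hpr]
            have : (-c) ^ 2 = c ^ 2 := by ring
            rw [this]
            linarith
  -- sum over rows
  have total : ∑ i, ∑ j, ((A i j) ^ 2 / F) * dist (dsapStep A b (1 / nn) x i j) z ^ 2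
      ≤ D - (1 / (nn * F)) * ∑ i, (posRes A b x i) ^ 2 := by
    calc ∑ i, ∑ j, ((A i j) ^ 2 / F) * dist (dsapStep A b (1 / nn) x i j) z ^ 2
        ≤ ∑ i, ((∑ j, (A i j) ^ 2) / F * D - (1 / (nn * F)) * (posRes A b x i) ^ 2) :=
          Finset.sum_le_sum fun i _ => key i
      _ = (∑ i, ∑ j, (A i j) ^ 2) / F * D - (1 / (nn * F)) * ∑ i, (posRes A b x i) ^ 2 := by
          rw [Finset.sum_sub_distrib, ← Finset.mul_sum, ← Finset.sum_mul, ← Finset.sum_div]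
      _ = D - (1 / (nn * F)) * ∑ i, (posRes A b x i) ^ 2 := by
          have : (∑ i, ∑ j, (A i j) ^ 2) = F := rfl
          rw [this, div_self hFpos.ne', one_mul]
  -- Hoffman bound
  have hnormsq : ‖posRes A b x‖ ^ 2 = ∑ i, (posRes A b x i) ^ 2 := by
    rw [EuclideanSpace.norm_eq, Real.sq_sqrt (Finset.sum_nonneg fun i _ => sq_nonneg _)]
    refine Finset.sum_congr rfl fun i _ => ?_
    rw [Real.norm_eq_abs, sq_abs]
  set d := Metric.infDist x S with hd
  have hdsq : d ^ 2 ≤ τ ^ 2 * ∑ i, (posRes A b x i) ^ 2 := by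
    have h1 : d ≤ τ * ‖posRes A b x‖ := hhoffman x
    have h2 : d ^ 2 ≤ (τ * ‖posRes A b x‖) ^ 2 :=
      pow_le_pow_left₀ Metric.infDist_nonneg h1 2
    calc d ^ 2 ≤ (τ * ‖posRes A b x‖) ^ 2 := h2
      _ = τ ^ 2 * ‖posRes A b x‖ ^ 2 := by ring
      _ = τ ^ 2 * ∑ i, (posRes A b x i) ^ 2 := by rw [hnormsq]
  -- infDist ≤ dist to z on each term
  have hlhs : ∑ i, ∑ j, ((A i j) ^ 2 / F) *
      (Metric.infDist (dsapStep A b (1 / nn) x i j) S) ^ 2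
      ≤ ∑ i, ∑ j, ((A i j) ^ 2 / F) * dist (dsapStep A b (1 / nn) x i j) z ^ 2 := by
    refine Finset.sum_le_sum fun i _ => Finset.sum_le_sum fun j _ => ?_
    refine mul_le_mul_of_nonneg_left ?_ (by positivity)
    exact pow_le_pow_left₀ Metric.infDist_nonneg
      (Metric.infDist_le_dist_of_mem hzS) 2
  have hDd : D = d ^ 2 := by rw [hD, hzd]
  -- final arithmetic
  have hfin : D - (1 / (nn * F)) * ∑ i, (posRes A b x i) ^ 2
      ≤ (1 - 1 / (nn * τ ^ 2 * F)) * d ^ 2 := by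
    rw [hDd]
    have hq : 0 < 1 / (nn * τ ^ 2 * F) := by positivity
    have h3 := mul_le_mul_of_nonneg_left hdsq (le_of_lt hq)
    have h4 : (1 / (nn * τ ^ 2 * F)) * (τ ^ 2 * ∑ i, (posRes A b x i) ^ 2)
        = (1 / (nn * F)) * ∑ i, (posRes A b x i) ^ 2 := by
      field_simp
    rw [h4] at h3
    nlinarith [h3]
  have goal1 : ∑ i, ∑ j, ((A i j) ^ 2 / F) *
      (Metric.infDist (dsapStep A b (1 / nn) x i j) S) ^ 2
      ≤ (1 - 1 / (nn * τ ^ 2 * F)) * d ^ 2 :=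
    le_trans hlhs (le_trans total hfin)
  exact goal1
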